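/- Under equilibrium driving conditions u = v and p = τv, the 5×5 nonlinear observability matrix O₂ of the augmented ACC system has rank 3, and its null space is spanned by the coordinate vectors e₃ = (0,0,1,0,0)ᵀ and e₄ = (0,0,0,1,0)ᵀ. -/

import Mathlib

open Matrix

theorem acc_observability_equilibrium (T p v u α β τ : ℝ)
    (hT : 0 < T) (hα : α ≠ 0) (hv : v ≠ 0)
    (hu : u = v) (hp : p = τ * v) :
    let O : Matrix (Fin 5) (Fin 5) ℝ :=
      !![1, 0, 0, 0, 0;
         1, -T, 0, 0, 0;
         1 - α*T^2, -2*T + (τ*α + β)*T^2, -(p - τ*v)*T^2, -(u - v)*T^2, α*v*T^2;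
         0, 1, 0, 0, 0;
         α*T, -α*τ*T, (p - τ*v)*T, (u - v)*T, -α*v*T]
    O.rank = 3 ∧
    LinearMap.ker O.mulVecLin =
      Submodule.span ℝ {(![0,0,1,0,0] : Fin 5 → ℝ), (![0,0,0,1,0] : Fin 5 → ℝ)} := by
  intro O
  have hT' : T ≠ 0 := ne_of_gt hT
  have hker : LinearMap.ker O.mulVecLin =
      Submodule.span ℝ {(![0,0,1,0,0] : Fin 5 → ℝ), (![0,0,0,1,0] : Fin 5 → ℝ)} := by
    apply le_antisymm
    · intro x hx
      simp only [LinearMap.mem_ker] at hx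
      have h0 := congrFun hx 0
      have h1 := congrFun hx 1
      have h4 := congrFun hx 4
      simp only [O, Matrix.mulVecLin_apply, Matrix.mulVec, dotProduct,
        Fin.sum_univ_five, Matrix.vecHead, Matrix.vecTail, hu, hp] at h0 h1 h4
      norm_num at h0 h1 h4
      simp only [Matrix.cons_val, zero_mul, add_zero] at h0 h1 h4
      have hx0 : x 0 = 0 := h0
      have hx1 : x 1 = 0 := by
        rw [hx0] at h1
        field_simp [hT'] at h1
        exact (mul_eq_zero.mp (by linarith : T * x 1 = 0)).resolve_left hT'
      have hx4 : x 4 = 0 := by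
        rw [hx0, hx1] at h4
        have hne : α * v * T ≠ 0 := mul_ne_zero (mul_ne_zero hα hv) hT'
        simp only [mul_zero, zero_add] at h4
        field_simp [hne] at h4
        exact (mul_eq_zero.mp (neg_eq_zero.mp h4)).resolve_left hne
      rw [Submodule.mem_span_pair]
      refine ⟨x 2, x 3, ?_⟩
      funext i
      fin_cases i <;> simp [hx0, hx1, hx4]
    · rw [Submodule.span_le]
      rintro y (rfl | rfl) <;>
      · simp only [SetLike.mem_coe, LinearMap.mem_ker]
        funext i
        fin_cases i <;>
          simp [O, Matrix.mulVecLin_apply, Matrix.mulVec, dotProduct,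
            Fin.sum_univ_five, hu, hp]
  refine ⟨?_, hker⟩
  have hli : LinearIndependent ℝ ![(![0,0,1,0,0] : Fin 5 → ℝ), (![0,0,0,1,0] : Fin 5 → ℝ)] := by
    rw [LinearIndependent.pair_iff]
    intro s t hst
    have h2 := congrFun hst 2
    have h3 := congrFun hst 3
    norm_num at h2 h3
    simp at h2 h3
    exact ⟨h2, h3⟩
  have hrange : Set.range ![(![0,0,1,0,0] : Fin 5 → ℝ), (![0,0,0,1,0] : Fin 5 → ℝ)]
      = {(![0,0,1,0,0] : Fin 5 → ℝ), (![0,0,0,1,0] : Fin 5 → ℝ)} := by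
    ext y
    constructor
    · rintro ⟨i, rfl⟩; fin_cases i <;> simp
    · rintro (rfl | rfl)
      · exact ⟨0, rfl⟩
      · exact ⟨1, rfl⟩
  have hdim : Module.finrank ℝ (LinearMap.ker O.mulVecLin) = 2 := by
    rw [hker, ← hrange, finrank_span_eq_card hli]
    simp
  have hrn := LinearMap.finrank_range_add_finrank_ker O.mulVecLin
  rw [hdim] at hrn
  simp [Module.finrank_fintype_fun_eq_card] at hrn
  rw [Matrix.rank]
  omega
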